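/- Let n, d be positive integers, let X ∈ ℝ^{n×d}, and let P ∈ ℝ^{n×n} be a matrix with Pᵀ = P and P² = I_n. Define the augmented design X̃ = [X, PX] ∈ ℝ^{n×2d} (columns of X followed by columns of PX), assume X̃ᵀX̃ is invertible, and let H = X̃(X̃ᵀX̃)⁻¹X̃ᵀ be the associated OLS projection matrix. Then P H P = H. -/

import Mathlib

open Matrix

/-- Let `X ∈ ℝ^{n×d}` and let `P ∈ ℝ^{n×n}` be symmetric with `P² = I`.
Let `Xaug = [X, PX]` be the augmented design, assume `Xaugᵀ Xaug` is invertible, and let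
`H = Xaug (Xaugᵀ Xaug)⁻¹ Xaugᵀ` be the OLS projection matrix.  Then `P H P = H`. -/
theorem stmt_0 (n d : ℕ) (hn : 0 < n) (hd : 0 < d)
    (X : Matrix (Fin n) (Fin d) ℝ) (P : Matrix (Fin n) (Fin n) ℝ)
    (hPsymm : Pᵀ = P) (hPidem : P * P = 1)
    (Xaug : Matrix (Fin n) (Fin d ⊕ Fin d) ℝ)
    (hXaug : Xaug = Matrix.fromCols X (P * X))
    (hinv : IsUnit (Xaugᵀ * Xaug))
    (H : Matrix (Fin n) (Fin n) ℝ)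
    (hH : H = Xaug * (Xaugᵀ * Xaug)⁻¹ * Xaugᵀ) :
    P * H * P = H := by
  -- the block-swap matrix
  set S : Matrix (Fin d ⊕ Fin d) (Fin d ⊕ Fin d) ℝ := Matrix.fromBlocks 0 1 1 0 with hS
  have hSsymm : Sᵀ = S := by
    simp [hS, Matrix.fromBlocks_transpose]
  have hSS : S * S = 1 := by
    simp [hS, Matrix.fromBlocks_multiply, ← Matrix.fromBlocks_one]
  have hSinv : S⁻¹ = S := Matrix.inv_eq_right_inv hSS
  -- P · Xaug = Xaug · S
  have hPX : P * Xaug = Xaug * S := by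
    rw [hXaug, hS, Matrix.mul_fromCols, Matrix.fromCols_mul_fromBlocks]
    simp [← Matrix.mul_assoc, hPidem]
  set G : Matrix (Fin d ⊕ Fin d) (Fin d ⊕ Fin d) ℝ := Xaugᵀ * Xaug with hG
  -- S G S = G
  have hSGS : S * G * S = G := by
    have : S * G * S = (Xaug * S)ᵀ * (Xaug * S) := by
      rw [Matrix.transpose_mul, hSsymm, hG]; simp only [Matrix.mul_assoc]
    rw [this, ← hPX, Matrix.transpose_mul, hPsymm, hG]
    rw [Matrix.mul_assoc, ← Matrix.mul_assoc P P Xaug, hPidem, Matrix.one_mul]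
  -- hence S G⁻¹ S = G⁻¹
  have hSGinvS : S * G⁻¹ * S = G⁻¹ := by
    conv_rhs => rw [← hSGS]
    rw [Matrix.mul_inv_rev, Matrix.mul_inv_rev, hSinv]
    simp only [Matrix.mul_assoc]
  -- Xaugᵀ P = S Xaugᵀ
  have hXtP : Xaugᵀ * P = S * Xaugᵀ := by
    rw [← hPsymm, ← Matrix.transpose_mul, hPX, Matrix.transpose_mul, hSsymm]
  calc P * H * P = Xaug * S * G⁻¹ * (S * Xaugᵀ) := by
        rw [hH, ← Matrix.mul_assoc, ← Matrix.mul_assoc, hPX, Matrix.mul_assoc _ Xaugᵀ P, hXtP]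
    _ = Xaug * (S * G⁻¹ * S) * Xaugᵀ := by simp only [Matrix.mul_assoc]
    _ = H := by rw [hSGinvS, hH]
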